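/- Let ρ be a normalized state on A and Π a positive semidefinite operator on A with Π ≤ Id. Then the purified distance between ρ and ΠρΠ satisfies P(ρ, ΠρΠ) ≤ sqrt(1 − (tr[Π² ρ])²). -/

import Mathlib

open scoped Classical Kronecker ComplexOrder

noncomputable section

namespace QIT

variable {ι κ γ : Type*} [Fintype ι] [DecidableEq ι] [Fintype κ] [DecidableEq κ]
  [Fintype γ] [DecidableEq γ]

/-- The old Mathlib `Matrix.PosSemidef.sqrt` (removed since), with its old definition. -/
def psdSqrt {A : Matrix ι ι ℂ} (hA : A.PosSemidef) : Matrix ι ι ℂ :=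
  hA.1.eigenvectorUnitary.1 * Matrix.diagonal ((↑) ∘ (√·) ∘ hA.1.eigenvalues) *
  (star hA.1.eigenvectorUnitary : Matrix ι ι ℂ)

/-- Trace norm `‖A‖₁ = tr √(AᴴA)`. -/
def traceNorm (A : Matrix ι ι ℂ) : ℝ :=
  (psdSqrt (Matrix.posSemidef_conjTranspose_mul_self A)).trace.re

/-- Matrix square root (of a PSD matrix; junk value `0` otherwise). -/
def msqrt (A : Matrix ι ι ℂ) : Matrix ι ι ℂ :=
  if h : A.PosSemidef then psdSqrt h else 0

/-- Fidelity `F(ρ,σ) = ‖√ρ√σ‖₁`. -/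
def fidelity (ρ σ : Matrix ι ι ℂ) : ℝ := traceNorm (msqrt ρ * msqrt σ)

/-- Generalized fidelity. -/
def genFid (ρ σ : Matrix ι ι ℂ) : ℝ :=
  fidelity ρ σ + Real.sqrt ((1 - ρ.trace.re) * (1 - σ.trace.re))

/-- Purified distance. -/
def purifiedDist (ρ σ : Matrix ι ι ℂ) : ℝ := Real.sqrt (1 - genFid ρ σ ^ 2)

def IsSubnormalized (ρ : Matrix ι ι ℂ) : Prop := ρ.PosSemidef ∧ ρ.trace.re ≤ 1

def IsDensity (ρ : Matrix ι ι ℂ) : Prop := ρ.PosSemidef ∧ ρ.trace = 1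

/-- Max-relative entropy `D_max(ρ‖σ) = inf {λ : 2^λ σ ≥ ρ}`. -/
def Dmax (ρ σ : Matrix ι ι ℂ) : ℝ :=
  sInf {l : ℝ | ((((2:ℝ) ^ l : ℝ) : ℂ) • σ - ρ).PosSemidef}

/-- Partial trace over the first factor. -/
def ptrace₁ (ρ : Matrix (ι × κ) (ι × κ) ℂ) : Matrix κ κ ℂ :=
  Matrix.of fun (b b' : κ) => ∑ a, ρ (a, b) (a, b')

/-- Partial trace over the second factor. -/
def ptrace₂ (ρ : Matrix (ι × κ) (ι × κ) ℂ) : Matrix ι ι ℂ :=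
  Matrix.of fun (a a' : ι) => ∑ b, ρ (a, b) (a', b)

/-- Max-information `I_max(A:B)_ρ = inf_{σ_B} D_max(ρ_{AB}‖ρ_A ⊗ σ_B)`. -/
def Imax (ρ : Matrix (ι × κ) (ι × κ) ℂ) : ℝ :=
  sInf {x : ℝ | ∃ σ : Matrix κ κ ℂ, IsDensity σ ∧ x = Dmax ρ (ptrace₂ ρ ⊗ₖ σ)}

/-- Conditional min-entropy `H_min(A|B)_ρ = −inf_{σ_B} D_max(ρ_{AB}‖Id_A ⊗ σ_B)`. -/
def HminCond (ρ : Matrix (ι × κ) (ι × κ) ℂ) : ℝ :=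
  - sInf {x : ℝ | ∃ σ : Matrix κ κ ℂ, IsDensity σ ∧ x = Dmax ρ ((1 : Matrix ι ι ℂ) ⊗ₖ σ)}

/-- Largest eigenvalue (operator norm for PSD matrices). -/
def maxEig (ρ : Matrix ι ι ℂ) : ℝ :=
  if h : ρ.IsHermitian then ⨆ i, h.eigenvalues i else 0

/-- Zero-Rényi entropy `H₀ = log rank`. -/
def H0 (ρ : Matrix ι ι ℂ) : ℝ := Real.logb 2 ρ.rank

/-- Min-entropy `H_min = −log ‖ρ‖_∞`. -/
def Hmin (ρ : Matrix ι ι ℂ) : ℝ := - Real.logb 2 (maxEig ρ)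

/-- Max-entropy `H_max = 2 log tr √ρ`. -/
def Hmax (ρ : Matrix ι ι ℂ) : ℝ := 2 * Real.logb 2 (msqrt ρ).trace.re

def smoothH0 (ε : ℝ) (ρ : Matrix ι ι ℂ) : ℝ :=
  sInf {x : ℝ | ∃ σ : Matrix ι ι ℂ, IsSubnormalized σ ∧ purifiedDist σ ρ ≤ ε ∧ x = H0 σ}

def smoothHmax (ε : ℝ) (ρ : Matrix ι ι ℂ) : ℝ :=
  sInf {x : ℝ | ∃ σ : Matrix ι ι ℂ, IsSubnormalized σ ∧ purifiedDist σ ρ ≤ ε ∧ x = Hmax σ}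

def smoothImax (ε : ℝ) (ρ : Matrix (ι × κ) (ι × κ) ℂ) : ℝ :=
  sInf {x : ℝ | ∃ σ : Matrix (ι × κ) (ι × κ) ℂ,
    IsSubnormalized σ ∧ purifiedDist σ ρ ≤ ε ∧ x = Imax σ}


section
open scoped MatrixOrder
lemma psdSqrt_eq_cfc {A : Matrix ι ι ℂ} (hA : A.PosSemidef) : psdSqrt hA = CFC.sqrt A := by
  rw [CFC.sqrt_eq_cfc, cfc_nnreal_eq_real _ A hA.nonneg, hA.1.cfc_eq]
  simp only [Matrix.IsHermitian.cfc, psdSqrt, Unitary.conjStarAlgAut_apply]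
  congr 3
  funext i
  simp [Real.coe_toNNReal', max_eq_left (hA.eigenvalues_nonneg i)]
end
theorem _root_.Matrix.PosSemidef.posSemidef_sqrt {A : Matrix ι ι ℂ} (hA : A.PosSemidef) :
    (psdSqrt hA).PosSemidef := by
  open scoped MatrixOrder in
  rw [psdSqrt_eq_cfc]; exact Matrix.nonneg_iff_posSemidef.mp (CFC.sqrt_nonneg A)
theorem _root_.Matrix.PosSemidef.sqrt_mul_self {A : Matrix ι ι ℂ} (hA : A.PosSemidef) :
    psdSqrt hA * psdSqrt hA = A := by
  open scoped MatrixOrder in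
  rw [psdSqrt_eq_cfc]; exact CFC.sqrt_mul_sqrt_self A hA.nonneg
theorem _root_.Matrix.PosSemidef.eq_sqrt_of_sq_eq {A B : Matrix ι ι ℂ} (hB : B.PosSemidef)
    (hA : A.PosSemidef) (h : B ^ 2 = A) : B = psdSqrt hA := by
  open scoped MatrixOrder in
  rw [psdSqrt_eq_cfc]; exact (CFC.sqrt_unique (by rw [← h, pow_two]) hB.nonneg).symm

open Matrix in
private lemma trace_re_nonneg' {A : Matrix ι ι ℂ} (hA : A.PosSemidef) : 0 ≤ A.trace.re := by
  have hdiag : ∀ i, 0 ≤ (A i i).re := by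
    intro i
    have h := hA.diag_nonneg (i := i)
    simpa using (Complex.le_def.mp h).1
  rw [Matrix.trace, Complex.re_sum]
  exact Finset.sum_nonneg fun i _ => hdiag i

open Matrix in
private lemma trace_mul_re_nonneg' {A B : Matrix ι ι ℂ} (hA : A.PosSemidef)
    (hB : B.PosSemidef) : 0 ≤ (A * B).trace.re := by
  have hK : (psdSqrt hB).PosSemidef := hB.posSemidef_sqrt
  have hKh : (psdSqrt hB)ᴴ = psdSqrt hB := hK.1
  have h1 : A * B = A * psdSqrt hB * psdSqrt hB := by
    rw [Matrix.mul_assoc, hB.sqrt_mul_self]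
  have h2 : (psdSqrt hB * A * psdSqrt hB).PosSemidef := by
    have := hA.mul_mul_conjTranspose_same (psdSqrt hB)
    rwa [hKh] at this
  rw [h1, Matrix.trace_mul_cycle]
  exact trace_re_nonneg' h2

open Matrix in
set_option maxHeartbeats 1000000 in
lemma trace_sqrt_mul_comm (Y : Matrix ι ι ℂ) :
    (psdSqrt (Matrix.posSemidef_conjTranspose_mul_self Y)).trace =
    (psdSqrt (Matrix.posSemidef_self_mul_conjTranspose Y)).trace := by
  set R := psdSqrt (Matrix.posSemidef_conjTranspose_mul_self Y) with hRdef
  have hR : R.PosSemidef := Matrix.PosSemidef.posSemidef_sqrt _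
  have hRR : R * R = Yᴴ * Y := Matrix.PosSemidef.sqrt_mul_self _
  have hH : R.IsHermitian := hR.1
  set U : Matrix ι ι ℂ := (hH.eigenvectorUnitary : Matrix ι ι ℂ) with hUdef
  set μ : ι → ℝ := hH.eigenvalues with hμdef
  have hμ0 : ∀ i, 0 ≤ μ i := hR.eigenvalues_nonneg
  have hU1 : U * star U = 1 := mem_unitaryGroup_iff.mp (hH.eigenvectorUnitary).2
  have hU2 : star U * U = 1 := mem_unitaryGroup_iff'.mp (hH.eigenvectorUnitary).2
  set d : (ℝ → ℝ) → Matrix ι ι ℂ :=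
    fun f => U * diagonal (fun i => ((f (μ i) : ℝ) : ℂ)) * star U with hd
  have hfun : ∀ f g : ℝ → ℝ, (∀ i, f (μ i) = g (μ i)) →
      (fun i => ((f (μ i) : ℝ) : ℂ)) = (fun i => ((g (μ i) : ℝ) : ℂ)) := by
    intro f g h
    funext i
    rw [h i]
  have hext : ∀ f g : ℝ → ℝ, (∀ i, f (μ i) = g (μ i)) → d f = d g := by
    intro f g h
    simp only [hd]
    rw [hfun f g h]
  have hspec : R = d id := by
    have := hH.spectral_theorem
    simpa [d, Function.comp_def] using this
  have hmul : ∀ f g : ℝ → ℝ, d f * d g = d (fun t => f t * g t) := by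
    intro f g
    simp only [hd]
    rw [show U * diagonal (fun i => ((f (μ i) : ℝ) : ℂ)) * star U *
          (U * diagonal (fun i => ((g (μ i) : ℝ) : ℂ)) * star U) =
        U * (diagonal (fun i => ((f (μ i) : ℝ) : ℂ)) * ((star U * U) *
          diagonal (fun i => ((g (μ i) : ℝ) : ℂ)))) * star U by
      simp only [Matrix.mul_assoc], hU2, Matrix.one_mul, Matrix.diagonal_mul_diagonal]
    rw [show (fun i => ((f (μ i) : ℝ) : ℂ) * ((g (μ i) : ℝ) : ℂ)) =
        (fun i => (((f (μ i) * g (μ i) : ℝ)) : ℂ)) by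
      funext i; push_cast; ring]
  have hherm : ∀ f : ℝ → ℝ, (d f)ᴴ = d f := by
    intro f
    have h1 : star (fun i => ((f (μ i) : ℝ) : ℂ)) = (fun i => ((f (μ i) : ℝ) : ℂ)) := by
      funext i; simp [Pi.star_def, Complex.conj_ofReal]
    simp only [hd, Matrix.conjTranspose_mul, Matrix.star_eq_conjTranspose,
      Matrix.conjTranspose_conjTranspose, Matrix.diagonal_conjTranspose, h1, Matrix.mul_assoc]
  have hone : d (fun _ => 1) = 1 := by
    simp only [hd, Complex.ofReal_one]
    rw [Matrix.diagonal_one, Matrix.mul_one, hU1]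
  have hzero : d (fun _ => 0) = 0 := by
    simp [hd]
  set v : ℝ → ℝ := fun t => if t = 0 then 0 else (Real.sqrt t)⁻¹ with hv
  set e : ℝ → ℝ := fun t => if t = 0 then 0 else 1 with he
  set C : Matrix ι ι ℂ := Y * d v with hC
  have hsqrt_sq : ∀ i, Real.sqrt (μ i) * Real.sqrt (μ i) = μ i :=
    fun i => Real.mul_self_sqrt (hμ0 i)
  have hsne : ∀ i, μ i ≠ 0 → Real.sqrt (μ i) ≠ 0 := by
    intro i h hcon
    exact h (by rw [← hsqrt_sq i, hcon, mul_zero])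
  clear_value d v e C U μ R
  -- Cᴴ * C = R
  have hCHC : Cᴴ * C = R := by
    have e1 : Cᴴ * C = d v * (Yᴴ * Y) * d v := by
      rw [hC, Matrix.conjTranspose_mul, hherm v]
      simp only [Matrix.mul_assoc]
    rw [e1, ← hRR, hspec, hmul id id, hmul v (fun t => id t * id t),
      hmul (fun t => v t * (id t * id t)) v]
    apply hext
    intro i
    by_cases h : μ i = 0
    · simp [hv, h]
    · have hs0 := hsne i h
      simp only [hv, if_neg h, id]
      field_simp
      exact (Real.sq_sqrt (hμ0 i)).symm
  -- Y * d e = Y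
  have hYP : Y * d e = Y := by
    have hadd : d (fun t => 1 - e t) + d e = 1 := by
      rw [← hone]
      simp only [hd]
      rw [← Matrix.add_mul, ← Matrix.mul_add, Matrix.diagonal_add]
      rw [show (fun i => (((1 - e (μ i) : ℝ)) : ℂ) + ((e (μ i) : ℝ) : ℂ))
          = (fun i => ((1 : ℝ) : ℂ)) by funext i; push_cast; ring]
    have h2 : Y - Y * d e = Y * d (fun t => 1 - e t) := by
      have hde : d (fun t => 1 - e t) = 1 - d e := by
        rw [← hadd]; abel
      rw [hde, Matrix.mul_sub, Matrix.mul_one]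
    have h1 : (Y - Y * d e)ᴴ * (Y - Y * d e) = 0 := by
      rw [h2, Matrix.conjTranspose_mul, hherm (fun t => 1 - e t)]
      have e3 : d (fun t => 1 - e t) * Yᴴ * (Y * d (fun t => 1 - e t)) =
          d (fun t => 1 - e t) * (Yᴴ * Y) * d (fun t => 1 - e t) := by
        simp only [Matrix.mul_assoc]
      rw [e3, ← hRR, hspec, hmul id id, hmul (fun t => 1 - e t) (fun t => id t * id t),
        hmul (fun t => (1 - e t) * (id t * id t)) (fun t => 1 - e t), ← hzero]
      apply hext
      intro i
      by_cases h : μ i = 0 <;> simp [he, h]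
    rw [Matrix.conjTranspose_mul_self_eq_zero, sub_eq_zero] at h1
    exact h1.symm
  -- (C * Cᴴ)^2 = Y * Yᴴ
  have hCCH_sq : (C * Cᴴ) ^ 2 = Y * Yᴴ := by
    have e1 : (C * Cᴴ) ^ 2 = C * (Cᴴ * C) * Cᴴ := by
      rw [pow_two]; simp only [Matrix.mul_assoc]
    rw [e1, hCHC, hC, Matrix.conjTranspose_mul, hherm v, hspec]
    have e2 : Y * d v * d id * (d v * Yᴴ) = Y * (d v * d id * d v) * Yᴴ := by
      simp only [Matrix.mul_assoc]
    rw [e2, hmul v id, hmul (fun t => v t * id t) v]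
    have e3 : d (fun t => v t * id t * v t) = d e := by
      apply hext
      intro i
      by_cases h : μ i = 0
      · simp [hv, he, h]
      · have hs0 := hsne i h
        simp only [hv, he, if_neg h, id]
        field_simp
        exact (Real.sq_sqrt (hμ0 i)).symm
    rw [e3, show Y * d e * Yᴴ = Y * (d e * Yᴴ) by simp only [Matrix.mul_assoc],
      ← Matrix.mul_assoc, hYP]
  have hfin : C * Cᴴ = psdSqrt (Matrix.posSemidef_self_mul_conjTranspose Y) :=
    (Matrix.posSemidef_self_mul_conjTranspose C).eq_sqrt_of_sq_eq
      (Matrix.posSemidef_self_mul_conjTranspose Y) hCCH_sq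
  calc R.trace = (Cᴴ * C).trace := by rw [hCHC]
    _ = (C * Cᴴ).trace := Matrix.trace_mul_comm _ _
    _ = _ := by rw [hfin]

open Matrix

set_option maxHeartbeats 1600000 in
/-- Gentle measurement lemma for the purified distance. -/
theorem purifiedDist_gentle (ρ Q : Matrix ι ι ℂ) (hρ : IsDensity ρ)
    (hQ : Q.PosSemidef) (hle : (1 - Q).PosSemidef) :
    purifiedDist ρ (Q * ρ * Q) ≤ Real.sqrt (1 - ((Q * Q * ρ).trace.re) ^ 2) := by
  have hρP : ρ.PosSemidef := hρ.1
  have hQh : Qᴴ = Q := hQ.1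
  have hσ : (Q * ρ * Q).PosSemidef := by
    have := hρP.mul_mul_conjTranspose_same Q
    rwa [hQh] at this
  set B := psdSqrt hρP with hBdef
  have hBpsd : B.PosSemidef := hρP.posSemidef_sqrt
  have hBh : Bᴴ = B := hBpsd.1
  have hBB : B * B = ρ := hρP.sqrt_mul_self
  set S := psdSqrt hσ with hSdef
  have hSpsd : S.PosSemidef := hσ.posSemidef_sqrt
  have hSh : Sᴴ = S := hSpsd.1
  have hSS : S * S = Q * ρ * Q := hσ.sqrt_mul_self
  have hmρ : msqrt ρ = B := by
    simp only [msqrt]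
    rw [dif_pos hρP]
  have hmσ : msqrt (Q * ρ * Q) = S := by
    simp only [msqrt]
    rw [dif_pos hσ]
  clear_value B S
  have hM : (B * Q * B).PosSemidef := by
    have := hQ.mul_mul_conjTranspose_same B
    rwa [hBh] at this
  have hMsq : (B * Q * B) ^ 2 = (B * S) * (B * S)ᴴ := by
    rw [Matrix.conjTranspose_mul, hSh, hBh, pow_two]
    have e1 : B * Q * B * (B * Q * B) = B * (Q * (B * B) * Q) * B := by
      simp only [Matrix.mul_assoc]
    have e2 : B * S * (S * B) = B * (S * S) * B := by
      simp only [Matrix.mul_assoc]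
    rw [e1, e2, hBB, hSS]
  have hMeq : B * Q * B = psdSqrt (Matrix.posSemidef_self_mul_conjTranspose (B * S)) :=
    hM.eq_sqrt_of_sq_eq (Matrix.posSemidef_self_mul_conjTranspose (B * S)) hMsq
  have hF : fidelity ρ (Q * ρ * Q) = (Q * ρ).trace.re := by
    rw [fidelity, hmρ, hmσ, traceNorm, trace_sqrt_mul_comm (B * S), ← hMeq,
      Matrix.trace_mul_cycle B Q B, hBB, Matrix.trace_mul_comm]
  have ht0 : 0 ≤ (Q * Q * ρ).trace.re := by
    rw [show (Q * Q * ρ).trace = (Q * ρ * Q).trace from (Matrix.trace_mul_cycle Q ρ Q).symm]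
    exact trace_re_nonneg' hσ
  have hD : (Q - Q * Q).PosSemidef := by
    set K := psdSqrt hQ with hKdef
    have hK : K.PosSemidef := hQ.posSemidef_sqrt
    have hKh : Kᴴ = K := hK.1
    have hKK : K * K = Q := hQ.sqrt_mul_self
    clear_value K
    have h1 := hle.mul_mul_conjTranspose_same K
    rw [hKh] at h1
    have h2 : K * (1 - Q) * Kᴴ = Q - Q * Q := by
      rw [hKh, Matrix.mul_sub, Matrix.mul_one, Matrix.sub_mul, hKK]
      congr 1
      calc K * Q * K
          = K * (K * K) * K := by rw [hKK]
        _ = K * K * (K * K) := by simp only [Matrix.mul_assoc]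
        _ = Q * Q := by rw [hKK]
    rw [hKh] at h2
    rwa [h2] at h1
  have hFt : (Q * Q * ρ).trace.re ≤ (Q * ρ).trace.re := by
    have h4 : 0 ≤ ((Q - Q * Q) * ρ).trace.re := trace_mul_re_nonneg' hD hρP
    rw [Matrix.sub_mul, Matrix.trace_sub, Complex.sub_re] at h4
    linarith
  have hgen : genFid ρ (Q * ρ * Q) = (Q * ρ).trace.re := by
    rw [genFid, hF, hρ.2]
    norm_num
  rw [purifiedDist, hgen]
  apply Real.sqrt_le_sqrt
  nlinarith [ht0, hFt]


end QIT
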